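/- Let q : ℤ → ℝ be nonnegative and finitely supported, let h be the one-dimensional Schrödinger operator on ℓ²(ℤ) associated with q, and let H be the guided Schrödinger operator on ℓ²(ℤ²) associated with q. If μ ∈ ℝ is an eigenvalue of h (i.e., h f = μ f for some nonzero f ∈ ℓ²(ℤ)), then the whole guided band [μ, μ + 4] is contained in the real spectrum of H, i.e., for every x ∈ [μ, μ+4] one has (x : ℂ) ∈ spectrum ℂ H. -/

import Mathlib

open Complex

private lemma guided_hasSum_prod (c : ℤ → ℂ) (hc : Summable fun i => ‖c i‖ ^ (2:ℝ))
    (f : lp (fun _ : ℤ => ℂ) 2) :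
    HasSum (fun m : ℤ × ℤ => ‖c m.1 * f m.2‖ ^ (2:ℝ))
      ((∑' i, ‖c i‖ ^ (2:ℝ)) * ‖f‖ ^ (2:ℝ)) := by
  have hf : HasSum (fun j : ℤ => ‖f j‖ ^ (2:ℝ)) (‖f‖ ^ (2:ℝ)) := by
    have := lp.hasSum_norm (p := 2) (E := fun _ : ℤ => ℂ) (by norm_num) f
    simpa using this
  have hmul : (fun m : ℤ × ℤ => ‖c m.1 * f m.2‖ ^ (2:ℝ))
      = fun m : ℤ × ℤ => ‖c m.1‖ ^ (2:ℝ) * ‖f m.2‖ ^ (2:ℝ) := by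
    funext m
    rw [norm_mul, Real.mul_rpow (norm_nonneg _) (norm_nonneg _)]
  have hs : Summable (fun m : ℤ × ℤ => ‖c m.1‖ ^ (2:ℝ) * ‖f m.2‖ ^ (2:ℝ)) :=
    hc.mul_of_nonneg hf.summable (fun i => Real.rpow_nonneg (norm_nonneg _) _)
      (fun j => Real.rpow_nonneg (norm_nonneg _) _)
  rw [hmul, hs.hasSum_iff, Summable.tsum_prod' hs (fun b => (hf.summable.mul_left (‖c b‖ ^ (2:ℝ))))]
  simp_rw [tsum_mul_left, hf.tsum_eq, tsum_mul_right]

private noncomputable def guidedProdLp (c : ℤ → ℂ) (hc : Summable fun i => ‖c i‖ ^ (2:ℝ))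
    (f : lp (fun _ : ℤ => ℂ) 2) : lp (fun _ : ℤ × ℤ => ℂ) 2 :=
  ⟨fun m => c m.1 * f m.2, memℓp_gen (by
    have := (guided_hasSum_prod c hc f).summable
    simpa using this)⟩

@[simp] private lemma guidedProdLp_apply (c : ℤ → ℂ) (hc : Summable fun i => ‖c i‖ ^ (2:ℝ))
    (f : lp (fun _ : ℤ => ℂ) 2) (m : ℤ × ℤ) :
    guidedProdLp c hc f m = c m.1 * f m.2 := rfl

private lemma guidedProdLp_norm_sq (c : ℤ → ℂ) (hc : Summable fun i => ‖c i‖ ^ (2:ℝ))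
    (f : lp (fun _ : ℤ => ℂ) 2) :
    ‖guidedProdLp c hc f‖ ^ (2:ℝ) = (∑' i, ‖c i‖ ^ (2:ℝ)) * ‖f‖ ^ (2:ℝ) := by
  have h1 := lp.hasSum_norm (p := 2) (E := fun _ : ℤ × ℤ => ℂ) (by norm_num)
    (guidedProdLp c hc f)
  rw [show ((2:ENNReal)).toReal = (2:ℝ) by norm_num] at h1
  exact h1.unique (guided_hasSum_prod c hc f)

set_option maxHeartbeats 1000000 in
/-- If `μ` is an eigenvalue of the one-dimensional fiber operator `h`, then the whole
guided band `[μ, μ+4]` lies in the real spectrum of the guided operator `H` on `ℤ²`. -/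
theorem guided_band_in_spectrum
    (q : ℤ → ℝ) (hq : ∀ n, 0 ≤ q n) (hqfin : (Function.support q).Finite)
    (h : lp (fun _ : ℤ => ℂ) 2 →L[ℂ] lp (fun _ : ℤ => ℂ) 2)
    (hh : ∀ (f : lp (fun _ : ℤ => ℂ) 2) (n : ℤ),
      h f n = 2 * f n - f (n + 1) - f (n - 1) - (q n : ℂ) * f n)
    (H : lp (fun _ : ℤ × ℤ => ℂ) 2 →L[ℂ] lp (fun _ : ℤ × ℤ => ℂ) 2)
    (hH : ∀ (f : lp (fun _ : ℤ × ℤ => ℂ) 2) (m₁ m₂ : ℤ),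
      H f (m₁, m₂) = 4 * f (m₁, m₂) - f (m₁ + 1, m₂) - f (m₁ - 1, m₂)
        - f (m₁, m₂ + 1) - f (m₁, m₂ - 1) - (q m₂ : ℂ) * f (m₁, m₂))
    (μ : ℝ) (f : lp (fun _ : ℤ => ℂ) 2) (hf : f ≠ 0) (hμ : h f = (μ : ℂ) • f) :
    ∀ x ∈ Set.Icc μ (μ + 4), (x : ℂ) ∈ spectrum ℂ H := by
  intro x hx
  obtain ⟨hx1, hx2⟩ := hx
  by_contra hcon
  rw [spectrum.notMem_iff] at hcon
  obtain ⟨u, hu⟩ := hcon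
  set A : lp (fun _ : ℤ × ℤ => ℂ) 2 →L[ℂ] lp (fun _ : ℤ × ℤ => ℂ) 2 :=
    algebraMap ℂ _ (x:ℂ) - H with hA
  set K : ℝ := ‖(↑u⁻¹ : lp (fun _ : ℤ × ℤ => ℂ) 2 →L[ℂ] lp (fun _ : ℤ × ℤ => ℂ) 2)‖ with hK
  have hbound : ∀ g : lp (fun _ : ℤ × ℤ => ℂ) 2, ‖g‖ ≤ K * ‖A g‖ := by
    intro g
    have key : (↑u⁻¹ : lp (fun _ : ℤ × ℤ => ℂ) 2 →L[ℂ] lp (fun _ : ℤ × ℤ => ℂ) 2) (A g)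
        = g := by
      rw [← hu, ← ContinuousLinearMap.mul_apply]
      simp
    calc ‖g‖ = ‖(↑u⁻¹ : lp (fun _ : ℤ × ℤ => ℂ) 2 →L[ℂ] lp (fun _ : ℤ × ℤ => ℂ) 2) (A g)‖ := by
          rw [key]
      _ ≤ K * ‖A g‖ := ContinuousLinearMap.le_opNorm _ _
  -- eigen relation pointwise
  have heig : ∀ n : ℤ, f (n+1) + f (n-1) + (q n : ℂ) * f n = (2 - (μ:ℂ)) * f n := by
    intro n
    have h1 : h f n = ((μ:ℂ) • f) n := by rw [hμ]
    rw [hh, lp.coeFn_smul, Pi.smul_apply, smul_eq_mul] at h1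
    linear_combination -h1
  -- the phase
  set t : ℝ := (μ + 2 - x) / 2 with ht
  set θ : ℝ := Real.arccos t with hθ
  have hcos : Real.cos θ = t := Real.cos_arccos (by rw [ht]; linarith) (by rw [ht]; linarith)
  have hkey : ((μ:ℂ) + 2 - (x:ℂ)) = Complex.exp ((θ:ℂ) * I) + Complex.exp (-((θ:ℂ) * I)) := by
    rw [show -((θ:ℂ)*I) = (-(θ:ℂ))*I by ring, Complex.exp_mul_I, Complex.exp_mul_I,
      Complex.cos_neg, Complex.sin_neg]
    have h1 : Complex.cos (θ:ℂ) = ((t:ℝ):ℂ) := by rw [← Complex.ofReal_cos, hcos]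
    rw [h1]
    have h2 : ((t:ℝ):ℂ) = ((μ:ℂ) + 2 - (x:ℂ)) / 2 := by rw [ht]; push_cast; ring
    rw [h2]; ring
  -- the cutoff phase sequences
  set c : ℕ → ℤ → ℂ := fun N i =>
    if i ∈ Finset.Icc (-(N:ℤ)) (N:ℤ) then Complex.exp ((θ:ℂ) * (i:ℂ) * I) else 0 with hc
  have hcnorm : ∀ (N : ℕ) (i : ℤ), i ∈ Finset.Icc (-(N:ℤ)) (N:ℤ) → ‖c N i‖ = 1 := by
    intro N i hi
    rw [hc]
    simp only [if_pos hi]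
    rw [show (θ:ℂ) * (i:ℂ) * I = ((θ * i : ℝ):ℂ) * I by push_cast; ring]
    exact Complex.norm_exp_ofReal_mul_I _
  have hcle : ∀ (N : ℕ) (i : ℤ), ‖c N i‖ ≤ 1 := by
    intro N i
    by_cases hi : i ∈ Finset.Icc (-(N:ℤ)) (N:ℤ)
    · rw [hcnorm N i hi]
    · have hz : c N i = 0 := by simp only [hc]; exact if_neg hi
      rw [hz]; simp
  have hcs : ∀ N : ℕ, Summable fun i => ‖c N i‖ ^ (2:ℝ) := by
    intro N
    apply summable_of_ne_finset_zero (s := Finset.Icc (-(N:ℤ)) (N:ℤ))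
    intro i hi
    have hz : c N i = 0 := by simp only [hc]; exact if_neg hi
    rw [hz, norm_zero, Real.zero_rpow (by norm_num : (2:ℝ) ≠ 0)]
  have hcsum : ∀ N : ℕ, ∑' i, ‖c N i‖ ^ (2:ℝ) = 2*(N:ℝ)+1 := by
    intro N
    rw [tsum_eq_sum (s := Finset.Icc (-(N:ℤ)) (N:ℤ)) (by
      intro i hi
      have hz : c N i = 0 := by simp only [hc]; exact if_neg hi
      rw [hz, norm_zero, Real.zero_rpow (by norm_num : (2:ℝ) ≠ 0)])]
    rw [Finset.sum_congr rfl (fun i hi => by rw [hcnorm N i hi, Real.one_rpow])]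
    rw [Finset.sum_const, nsmul_eq_mul, mul_one]
    have hcard : (Finset.Icc (-(N:ℤ)) (N:ℤ)).card = 2*N+1 := by
      rw [Int.card_Icc]; omega
    rw [hcard]; push_cast; ring
  -- the error sequences
  set e : ℕ → ℤ → ℂ := fun N i =>
    ((x:ℂ) - 2 - (μ:ℂ)) * c N i + c N (i+1) + c N (i-1) with he
  have he0 : ∀ (N : ℕ) (i : ℤ),
      i ∉ ({-(N:ℤ)-1, -(N:ℤ), (N:ℤ), (N:ℤ)+1} : Finset ℤ) → e N i = 0 := by
    intro N i hi
    simp only [Finset.mem_insert, Finset.mem_singleton, not_or] at hi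
    obtain ⟨h1, h2, h3, h4⟩ := hi
    by_cases hin : -(N:ℤ) ≤ i ∧ i ≤ (N:ℤ)
    · -- interior: all three indicator conditions hold
      have hi0 : i ∈ Finset.Icc (-(N:ℤ)) (N:ℤ) := Finset.mem_Icc.2 hin
      have hip : i+1 ∈ Finset.Icc (-(N:ℤ)) (N:ℤ) := Finset.mem_Icc.2 (by omega)
      have him : i-1 ∈ Finset.Icc (-(N:ℤ)) (N:ℤ) := Finset.mem_Icc.2 (by omega)
      rw [he]
      simp only [hc, if_pos hi0, if_pos hip, if_pos him]
      have hp : Complex.exp ((θ:ℂ) * ((i+1 : ℤ):ℂ) * I)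
          = Complex.exp ((θ:ℂ) * (i:ℂ) * I) * Complex.exp ((θ:ℂ) * I) := by
        rw [← Complex.exp_add]; congr 1; push_cast; ring
      have hm : Complex.exp ((θ:ℂ) * ((i-1 : ℤ):ℂ) * I)
          = Complex.exp ((θ:ℂ) * (i:ℂ) * I) * Complex.exp (-((θ:ℂ) * I)) := by
        rw [← Complex.exp_add]; congr 1; push_cast; ring
      rw [hp, hm]
      linear_combination (-(Complex.exp ((θ:ℂ) * (i:ℂ) * I))) * hkey
    · -- exterior: all three indicator conditions fail
      rw [he]
      simp only [hc, Finset.mem_Icc]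
      rw [if_neg (by omega), if_neg (by omega), if_neg (by omega)]
      ring
  have hebound : ∀ (N : ℕ) (i : ℤ), ‖e N i‖ ≤ 4 := by
    intro N i
    have hxc : ‖(x:ℂ) - 2 - (μ:ℂ)‖ ≤ 2 := by
      rw [show (x:ℂ) - 2 - (μ:ℂ) = ((x - 2 - μ : ℝ):ℂ) by push_cast; ring,
        Complex.norm_real, Real.norm_eq_abs]
      rw [abs_le]; constructor <;> linarith
    calc ‖e N i‖ ≤ ‖((x:ℂ) - 2 - (μ:ℂ)) * c N i + c N (i+1)‖ + ‖c N (i-1)‖ := norm_add_le _ _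
      _ ≤ (‖((x:ℂ) - 2 - (μ:ℂ)) * c N i‖ + ‖c N (i+1)‖) + ‖c N (i-1)‖ := by
          gcongr; exact norm_add_le _ _
      _ = ‖(x:ℂ) - 2 - (μ:ℂ)‖ * ‖c N i‖ + ‖c N (i+1)‖ + ‖c N (i-1)‖ := by rw [norm_mul]
      _ ≤ 4 := by
          have b0 := hcle N i
          have b2 := hcle N (i+1)
          have b3 := hcle N (i-1)
          have hm : ‖(x:ℂ) - 2 - (μ:ℂ)‖ * ‖c N i‖ ≤ 2 * 1 :=
            mul_le_mul hxc b0 (norm_nonneg _) (by norm_num)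
          linarith
  have hes : ∀ N : ℕ, Summable fun i => ‖e N i‖ ^ (2:ℝ) := by
    intro N
    apply summable_of_ne_finset_zero (s := ({-(N:ℤ)-1, -(N:ℤ), (N:ℤ), (N:ℤ)+1} : Finset ℤ))
    intro i hi
    rw [he0 N i hi, norm_zero, Real.zero_rpow (by norm_num : (2:ℝ) ≠ 0)]
  have hesum : ∀ N : ℕ, ∑' i, ‖e N i‖ ^ (2:ℝ) ≤ 64 := by
    intro N
    rw [tsum_eq_sum (s := ({-(N:ℤ)-1, -(N:ℤ), (N:ℤ), (N:ℤ)+1} : Finset ℤ)) (by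
      intro i hi
      rw [he0 N i hi, norm_zero, Real.zero_rpow (by norm_num : (2:ℝ) ≠ 0)])]
    have hstep : ∀ i ∈ ({-(N:ℤ)-1, -(N:ℤ), (N:ℤ), (N:ℤ)+1} : Finset ℤ),
        ‖e N i‖ ^ (2:ℝ) ≤ 16 := by
      intro i _
      calc ‖e N i‖ ^ (2:ℝ) ≤ (4:ℝ) ^ (2:ℝ) :=
            Real.rpow_le_rpow (norm_nonneg _) (hebound N i) (by norm_num)
        _ = 16 := by
            rw [show (2:ℝ) = ((2:ℕ):ℝ) by norm_num, Real.rpow_natCast]; norm_num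
    calc ∑ i ∈ ({-(N:ℤ)-1, -(N:ℤ), (N:ℤ), (N:ℤ)+1} : Finset ℤ), ‖e N i‖ ^ (2:ℝ)
        ≤ ∑ _i ∈ ({-(N:ℤ)-1, -(N:ℤ), (N:ℤ), (N:ℤ)+1} : Finset ℤ), (16:ℝ) :=
          Finset.sum_le_sum hstep
      _ = (({-(N:ℤ)-1, -(N:ℤ), (N:ℤ), (N:ℤ)+1} : Finset ℤ).card : ℝ) * 16 := by
          rw [Finset.sum_const, nsmul_eq_mul]
      _ ≤ 4 * 16 := by
          have h1 := Finset.card_insert_le (-(N:ℤ)-1) ({-(N:ℤ), (N:ℤ), (N:ℤ)+1} : Finset ℤ)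
          have h2 := Finset.card_insert_le (-(N:ℤ)) ({(N:ℤ), (N:ℤ)+1} : Finset ℤ)
          have h3 := Finset.card_insert_le (N:ℤ) ({(N:ℤ)+1} : Finset ℤ)
          have h4 : ({(N:ℤ)+1} : Finset ℤ).card = 1 := Finset.card_singleton _
          have hcard : ({-(N:ℤ)-1, -(N:ℤ), (N:ℤ), (N:ℤ)+1} : Finset ℤ).card ≤ 4 := by omega
          have : (({-(N:ℤ)-1, -(N:ℤ), (N:ℤ), (N:ℤ)+1} : Finset ℤ).card : ℝ) ≤ 4 := by
            exact_mod_cast hcard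
          nlinarith
      _ = 64 := by norm_num
  -- the test vectors and their images
  have hAG : ∀ N : ℕ, A (guidedProdLp (c N) (hcs N) f) = guidedProdLp (e N) (hes N) f := by
    intro N
    apply lp.ext
    funext m
    obtain ⟨a, b⟩ := m
    have hAapp : (A (guidedProdLp (c N) (hcs N) f)) (a, b)
        = (x:ℂ) * (guidedProdLp (c N) (hcs N) f (a, b))
          - (H (guidedProdLp (c N) (hcs N) f)) (a, b) := by
      rw [hA, Algebra.algebraMap_eq_smul_one, ContinuousLinearMap.sub_apply,
        ContinuousLinearMap.smul_apply, ContinuousLinearMap.one_apply,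
        lp.coeFn_sub, Pi.sub_apply, lp.coeFn_smul, Pi.smul_apply, smul_eq_mul]
    show (A (guidedProdLp (c N) (hcs N) f)) (a, b) = e N a * f b
    rw [hAapp, hH]
    simp only [guidedProdLp_apply]
    rw [he]
    linear_combination (c N a) * heig b
  -- norm comparison
  have hfpos : (0:ℝ) < ‖f‖ ^ (2:ℝ) :=
    Real.rpow_pos_of_pos (norm_pos_iff.2 hf) _
  have hmain : ∀ N : ℕ, 2*(N:ℝ)+1 ≤ K ^ (2:ℝ) * 64 := by
    intro N
    have h1 : ‖guidedProdLp (c N) (hcs N) f‖ ≤ K * ‖guidedProdLp (e N) (hes N) f‖ := by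
      have := hbound (guidedProdLp (c N) (hcs N) f)
      rwa [hAG N] at this
    have hKnn : (0:ℝ) ≤ K := norm_nonneg _
    have h2 : ‖guidedProdLp (c N) (hcs N) f‖ ^ (2:ℝ)
        ≤ (K * ‖guidedProdLp (e N) (hes N) f‖) ^ (2:ℝ) :=
      Real.rpow_le_rpow (norm_nonneg _) h1 (by norm_num)
    rw [Real.mul_rpow hKnn (norm_nonneg _)] at h2
    rw [guidedProdLp_norm_sq, guidedProdLp_norm_sq, hcsum] at h2
    have h3 : ‖guidedProdLp (e N) (hes N) f‖ ^ (2:ℝ)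
        = (∑' i, ‖e N i‖ ^ (2:ℝ)) * ‖f‖ ^ (2:ℝ) := guidedProdLp_norm_sq _ _ _
    -- h2 : (2N+1) * ‖f‖² ≤ K² * ((∑ ‖e‖²) * ‖f‖²)
    have h4 : (2*(N:ℝ)+1) * ‖f‖ ^ (2:ℝ) ≤ K ^ (2:ℝ) * (64 * ‖f‖ ^ (2:ℝ)) := by
      refine h2.trans ?_
      have : (∑' i, ‖e N i‖ ^ (2:ℝ)) * ‖f‖ ^ (2:ℝ) ≤ 64 * ‖f‖ ^ (2:ℝ) :=
        mul_le_mul_of_nonneg_right (hesum N) hfpos.le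
      exact mul_le_mul_of_nonneg_left this (Real.rpow_nonneg hKnn _)
    have := (mul_le_mul_iff_of_pos_right hfpos).1 (by linarith [h4] : (2*(N:ℝ)+1) * ‖f‖ ^ (2:ℝ)
      ≤ (K ^ (2:ℝ) * 64) * ‖f‖ ^ (2:ℝ))
    exact this
  obtain ⟨N, hN⟩ := exists_nat_gt (K ^ (2:ℝ) * 64)
  have := hmain N
  have hNN : (N:ℝ) ≤ 2*(N:ℝ)+1 := by
    have : (0:ℝ) ≤ (N:ℝ) := Nat.cast_nonneg N
    linarith
  linarith
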